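/- Every unsatisfiable linear 2-CNF formula has at least 6 clauses. -/

import Mathlib

open Finset

private lemma k4e_aux : ∀ a1 b1 a2 b2 a3 b3 c1 c2 d1 d2 : Bool, ∃ x y1 y2 y3 : Bool,
    (x = a1 ∨ y1 = b1) ∧ (x = a2 ∨ y2 = b2) ∧ (x = a3 ∨ y3 = b3) ∧
    (y1 = c1 ∨ y2 = c2) ∧ (y3 = d1 ∨ y1 = d2) := by
  intro a1 b1 a2 b2 a3 b3 c1 c2 d1 d2
  cases a1 <;> cases b1 <;> cases a2 <;> cases b2 <;> cases a3 <;> cases b3 <;>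
    cases c1 <;> cases c2 <;> cases d1 <;> cases d2 <;> decide

section Main
variable {V : Type*} [DecidableEq V]

private lemma mem_of_var {C : Finset (V × Bool)} {v : V}
    (h : v ∈ C.image Prod.fst) : ∃ b, (v, b) ∈ C := by
  obtain ⟨p, hp, rfl⟩ := Finset.mem_image.mp h
  exact ⟨p.2, by simpa using hp⟩

private lemma other_var {C : Finset (V × Bool)} {x : V}
    (h2 : (C.image Prod.fst).card = 2) (hx : x ∈ C.image Prod.fst) :
    ∃ y, y ≠ x ∧ C.image Prod.fst = {x, y} := by
  obtain ⟨a, b, hab, hC⟩ := Finset.card_eq_two.mp h2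
  rw [hC] at hx
  rcases Finset.mem_insert.mp hx with rfl | hx
  · exact ⟨b, fun h => hab h.symm, hC⟩
  · have hxb : x = b := Finset.mem_singleton.mp hx
    subst hxb
    exact ⟨a, fun h => hab h, by rw [hC]; exact Finset.pair_comm a x⟩

private lemma no_two_shared {F : Finset (Finset (V × Bool))}
    (hlin : ∀ C ∈ F, ∀ D ∈ F, C ≠ D →
      ((C.image Prod.fst) ∩ (D.image Prod.fst)).card ≤ 1)
    {C D : Finset (V × Bool)} (hC : C ∈ F) (hD : D ∈ F) (hne : C ≠ D)
    {u v : V} (huv : u ≠ v) (huC : u ∈ C.image Prod.fst) (huD : u ∈ D.image Prod.fst)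
    (hvC : v ∈ C.image Prod.fst) (hvD : v ∈ D.image Prod.fst) : False := by
  have hsub : ({u, v} : Finset V) ⊆ (C.image Prod.fst) ∩ (D.image Prod.fst) := by
    intro w hw
    rcases Finset.mem_insert.mp hw with rfl | hw
    · exact Finset.mem_inter.mpr ⟨huC, huD⟩
    · rw [Finset.mem_singleton.mp hw]
      exact Finset.mem_inter.mpr ⟨hvC, hvD⟩
  have := (Finset.card_pair huv ▸ Finset.card_le_card hsub).trans (hlin C hC D hD hne)
  omega

/-- The K4-minus-an-edge final case. -/
private lemma k4e_case {F : Finset (Finset (V × Bool))}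
    (h5 : F.card ≤ 5)
    (hlin : ∀ C ∈ F, ∀ D ∈ F, C ≠ D →
      ((C.image Prod.fst) ∩ (D.image Prod.fst)).card ≤ 1)
    (hdeg : ∀ C ∈ F, ∀ v ∈ C.image Prod.fst, ∃ D ∈ F, v ∈ D.image Prod.fst ∧ D ≠ C)
    {x y1 y2 y3 : V} {C1 C2 C3 D D3 : Finset (V × Bool)}
    (hC1 : C1 ∈ F) (hC2 : C2 ∈ F) (hC3 : C3 ∈ F)
    (h12 : C1 ≠ C2) (h13 : C1 ≠ C3) (h23 : C2 ≠ C3)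
    (hv1 : C1.image Prod.fst = {x, y1}) (hv2 : C2.image Prod.fst = {x, y2})
    (hv3 : C3.image Prod.fst = {x, y3})
    (hy1x : y1 ≠ x) (hy2x : y2 ≠ x) (hy3x : y3 ≠ x)
    (hy12 : y1 ≠ y2) (hy13 : y1 ≠ y3) (hy23 : y2 ≠ y3)
    (hD : D ∈ F) (hxD : x ∉ D.image Prod.fst)
    (hy1D : y1 ∈ D.image Prod.fst) (hy2D : y2 ∈ D.image Prod.fst)
    (hD3 : D3 ∈ F) (hxD3 : x ∉ D3.image Prod.fst) (hy3D3 : y3 ∈ D3.image Prod.fst)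
    (hcv : (D3.image Prod.fst).card = 2) (hDv : (D.image Prod.fst).card = 2) :
    ∃ α : V → Bool, ∀ C ∈ F, ∃ p ∈ C, α p.1 = p.2 := by
  -- x ∈ vars Ci
  have hxC1 : x ∈ C1.image Prod.fst := by rw [hv1]; simp
  have hxC2 : x ∈ C2.image Prod.fst := by rw [hv2]; simp
  have hxC3 : x ∈ C3.image Prod.fst := by rw [hv3]; simp
  have hy1C1 : y1 ∈ C1.image Prod.fst := by rw [hv1]; simp
  have hy2C2 : y2 ∈ C2.image Prod.fst := by rw [hv2]; simp
  have hy3C3 : y3 ∈ C3.image Prod.fst := by rw [hv3]; simp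
  -- D, D3 distinct from the Ci's
  have hDC1 : D ≠ C1 := fun h => hxD (h ▸ hxC1)
  have hDC2 : D ≠ C2 := fun h => hxD (h ▸ hxC2)
  have hDC3 : D ≠ C3 := fun h => hxD (h ▸ hxC3)
  have hD3C1 : D3 ≠ C1 := fun h => hxD3 (h ▸ hxC1)
  have hD3C2 : D3 ≠ C2 := fun h => hxD3 (h ▸ hxC2)
  have hD3C3 : D3 ≠ C3 := fun h => hxD3 (h ▸ hxC3)
  -- vars D = {y1, y2}
  have hvD : D.image Prod.fst = {y1, y2} := by
    refine (Finset.eq_of_subset_of_card_le ?_ ?_).symm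
    · intro w hw
      rcases Finset.mem_insert.mp hw with rfl | hw
      · exact hy1D
      · rw [Finset.mem_singleton.mp hw]; exact hy2D
    · rw [hDv, Finset.card_pair hy12]
  have hD3D : D3 ≠ D := by
    intro h
    rw [h, hvD] at hy3D3
    rcases Finset.mem_insert.mp hy3D3 with h' | h'
    · exact hy13 h'.symm
    · exact hy23 (Finset.mem_singleton.mp h').symm
  -- second variable of D3
  obtain ⟨z, hzy3, hvD3⟩ := other_var hcv hy3D3
  have hzx : z ≠ x := fun h => hxD3 (by rw [hvD3, h]; simp)
  have hzD3 : z ∈ D3.image Prod.fst := by rw [hvD3]; simp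
  -- z must be y1 or y2, else a sixth clause exists
  have hz12 : z = y1 ∨ z = y2 := by
    by_contra hz
    push_neg at hz
    obtain ⟨hzy1, hzy2⟩ := hz
    obtain ⟨E, hE, hzE, hED3⟩ := hdeg D3 hD3 z hzD3
    have hEC1 : E ≠ C1 := fun h => by
      rw [h, hv1] at hzE
      rcases Finset.mem_insert.mp hzE with h' | h'
      · exact hzx h'
      · exact hzy1 (Finset.mem_singleton.mp h')
    have hEC2 : E ≠ C2 := fun h => by
      rw [h, hv2] at hzE
      rcases Finset.mem_insert.mp hzE with h' | h'
      · exact hzx h'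
      · exact hzy2 (Finset.mem_singleton.mp h')
    have hEC3 : E ≠ C3 := fun h => by
      rw [h, hv3] at hzE
      rcases Finset.mem_insert.mp hzE with h' | h'
      · exact hzx h'
      · exact hzy3 (Finset.mem_singleton.mp h')
    have hED : E ≠ D := fun h => by
      rw [h, hvD] at hzE
      rcases Finset.mem_insert.mp hzE with h' | h'
      · exact hzy1 h'
      · exact hzy2 (Finset.mem_singleton.mp h')
    have hsub : ({C1, C2, C3, D, D3, E} : Finset (Finset (V × Bool))) ⊆ F := by
      intro w hw
      simp only [Finset.mem_insert, Finset.mem_singleton] at hw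
      rcases hw with rfl | rfl | rfl | rfl | rfl | rfl <;> assumption
    have hcard6 : ({C1, C2, C3, D, D3, E} : Finset (Finset (V × Bool))).card = 6 := by
      rw [Finset.card_insert_of_notMem (by simp [h12, h13, hDC1.symm, hD3C1.symm, hEC1.symm]),
        Finset.card_insert_of_notMem (by simp [h23, hDC2.symm, hD3C2.symm, hEC2.symm]),
        Finset.card_insert_of_notMem (by simp [hDC3.symm, hD3C3.symm, hEC3.symm]),
        Finset.card_insert_of_notMem (by simp [hD3D.symm, hED.symm]),
        Finset.card_insert_of_notMem (by simp [hED3.symm]),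
        Finset.card_singleton]
    have := Finset.card_le_card hsub
    omega
  -- F is exactly these five clauses
  have hsub5 : ({C1, C2, C3, D, D3} : Finset (Finset (V × Bool))) ⊆ F := by
    intro w hw
    simp only [Finset.mem_insert, Finset.mem_singleton] at hw
    rcases hw with rfl | rfl | rfl | rfl | rfl <;> assumption
  have hcard5 : ({C1, C2, C3, D, D3} : Finset (Finset (V × Bool))).card = 5 := by
    rw [Finset.card_insert_of_notMem (by simp [h12, h13, hDC1.symm, hD3C1.symm]),
      Finset.card_insert_of_notMem (by simp [h23, hDC2.symm, hD3C2.symm]),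
      Finset.card_insert_of_notMem (by simp [hDC3.symm, hD3C3.symm]),
      Finset.card_insert_of_notMem (by simp [hD3D.symm]),
      Finset.card_singleton]
  have hFeq : ({C1, C2, C3, D, D3} : Finset (Finset (V × Bool))) = F :=
    Finset.eq_of_subset_of_card_le hsub5 (by omega)
  -- extract literals
  obtain ⟨a1, ha1⟩ := mem_of_var hxC1
  obtain ⟨b1, hb1⟩ := mem_of_var hy1C1
  obtain ⟨a2, ha2⟩ := mem_of_var hxC2
  obtain ⟨b2, hb2⟩ := mem_of_var hy2C2
  obtain ⟨a3, ha3⟩ := mem_of_var hxC3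
  obtain ⟨b3, hb3⟩ := mem_of_var hy3C3
  obtain ⟨c1, hc1⟩ := mem_of_var hy1D
  obtain ⟨c2, hc2⟩ := mem_of_var hy2D
  obtain ⟨d1, hd1⟩ := mem_of_var hy3D3
  obtain ⟨d2, hd2⟩ := mem_of_var hzD3
  rcases hz12 with hzz | hzz
  all_goals rw [hzz] at hd2
  · -- z = y1
    obtain ⟨X, Y1, Y2, Y3, k1, k2, k3, k4, k5⟩ := k4e_aux a1 b1 a2 b2 a3 b3 c1 c2 d1 d2
    refine ⟨fun v => if v = x then X else if v = y1 then Y1 else if v = y2 then Y2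
      else if v = y3 then Y3 else true, ?_⟩
    intro C hC
    rw [← hFeq] at hC
    simp only [Finset.mem_insert, Finset.mem_singleton] at hC
    rcases hC with rfl | rfl | rfl | rfl | rfl
    · rcases k1 with h | h
      · exact ⟨(x, a1), ha1, by simpa using h⟩
      · exact ⟨(y1, b1), hb1, by simp [hy1x, h]⟩
    · rcases k2 with h | h
      · exact ⟨(x, a2), ha2, by simpa using h⟩
      · exact ⟨(y2, b2), hb2, by simp [hy2x, hy12.symm, h]⟩
    · rcases k3 with h | h
      · exact ⟨(x, a3), ha3, by simpa using h⟩
      · exact ⟨(y3, b3), hb3, by simp [hy3x, hy13.symm, hy23.symm, h]⟩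
    · rcases k4 with h | h
      · exact ⟨(y1, c1), hc1, by simp [hy1x, h]⟩
      · exact ⟨(y2, c2), hc2, by simp [hy2x, hy12.symm, h]⟩
    · rcases k5 with h | h
      · exact ⟨(y3, d1), hd1, by simp [hy3x, hy13.symm, hy23.symm, h]⟩
      · exact ⟨(y1, d2), hd2, by simp [hy1x, h]⟩
  · -- z = y2
    obtain ⟨X, Y2, Y1, Y3, k2, k1, k3, k4, k5⟩ := k4e_aux a2 b2 a1 b1 a3 b3 c2 c1 d1 d2
    refine ⟨fun v => if v = x then X else if v = y1 then Y1 else if v = y2 then Y2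
      else if v = y3 then Y3 else true, ?_⟩
    intro C hC
    rw [← hFeq] at hC
    simp only [Finset.mem_insert, Finset.mem_singleton] at hC
    rcases hC with rfl | rfl | rfl | rfl | rfl
    · rcases k1 with h | h
      · exact ⟨(x, a1), ha1, by simpa using h⟩
      · exact ⟨(y1, b1), hb1, by simp [hy1x, h]⟩
    · rcases k2 with h | h
      · exact ⟨(x, a2), ha2, by simpa using h⟩
      · exact ⟨(y2, b2), hb2, by simp [hy2x, hy12.symm, h]⟩
    · rcases k3 with h | h
      · exact ⟨(x, a3), ha3, by simpa using h⟩
      · exact ⟨(y3, b3), hb3, by simp [hy3x, hy13.symm, hy23.symm, h]⟩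
    · rcases k4 with h | h
      · exact ⟨(y2, c2), hc2, by simp [hy2x, hy12.symm, h]⟩
      · exact ⟨(y1, c1), hc1, by simp [hy1x, h]⟩
    · rcases k5 with h | h
      · exact ⟨(y3, d1), hd1, by simp [hy3x, hy13.symm, hy23.symm, h]⟩
      · exact ⟨(y2, d2), hd2, by simp [hy2x, hy12.symm, h]⟩

private lemma sat_of_card_le_five :
    ∀ (n : ℕ) (F : Finset (Finset (V × Bool))),
    F.card = n → n ≤ 5 →
    (∀ C ∈ F, C.card = 2 ∧ (C.image Prod.fst).card = 2) →
    (∀ C ∈ F, ∀ D ∈ F, C ≠ D →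
      ((C.image Prod.fst) ∩ (D.image Prod.fst)).card ≤ 1) →
    ∃ α : V → Bool, ∀ C ∈ F, ∃ p ∈ C, α p.1 = p.2 := by
  intro n
  induction n with
  | zero =>
    intro F hF _ _ _
    exact ⟨fun _ => true, by simp [Finset.card_eq_zero.mp hF]⟩
  | succ m ih =>
    intro F hF hn hcard hlin
    classical
    by_cases hdeg1 : ∃ C ∈ F, ∃ v ∈ C.image Prod.fst,
        ∀ D ∈ F, v ∈ D.image Prod.fst → D = C
    · -- a degree-1 variable: remove its clause and recurse
      obtain ⟨C, hC, v, hv, hvonly⟩ := hdeg1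
      have hFe : (F.erase C).card = m := by
        rw [Finset.card_erase_of_mem hC, hF]
        omega
      obtain ⟨α, hα⟩ := ih (F.erase C) hFe (by omega)
        (fun D hD => hcard D (Finset.mem_of_mem_erase hD))
        (fun D hD E hE hne => hlin D (Finset.mem_of_mem_erase hD) E
          (Finset.mem_of_mem_erase hE) hne)
      obtain ⟨b, hb⟩ := mem_of_var hv
      refine ⟨Function.update α v b, ?_⟩
      intro D hD
      by_cases hDC : D = C
      · exact ⟨(v, b), hDC ▸ hb, by simp⟩
      · obtain ⟨p, hp, hpα⟩ := hα D (Finset.mem_erase.mpr ⟨hDC, hD⟩)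
        have hpv : p.1 ≠ v := by
          intro h
          exact hDC (hvonly D hD (Finset.mem_image.mpr ⟨p, hp, h⟩))
        exact ⟨p, hp, by rwa [Function.update_of_ne hpv]⟩
    · push_neg at hdeg1
      -- hdeg1 : every variable of every clause appears in another clause
      by_cases hbig : ∃ C ∈ F, ∃ v ∈ C.image Prod.fst,
          2 < (F.filter (fun D => v ∈ D.image Prod.fst)).card
      · -- K4-minus-edge case
        obtain ⟨C0, hC0, x, hx, hxdeg⟩ := hbig
        obtain ⟨t, hts, ht3⟩ := Finset.exists_subset_card_eq (n := 3) (by omega :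
          3 ≤ (F.filter (fun D => x ∈ D.image Prod.fst)).card)
        obtain ⟨C1, C2, C3, h12, h13, h23, hteq⟩ := Finset.card_eq_three.mp ht3
        have hmem : ∀ E ∈ t, E ∈ F ∧ x ∈ E.image Prod.fst := by
          intro E hE
          have := hts hE
          rw [Finset.mem_filter] at this
          exact this
        have hC1' := hmem C1 (by rw [hteq]; simp)
        have hC2' := hmem C2 (by rw [hteq]; simp)
        have hC3' := hmem C3 (by rw [hteq]; simp)
        obtain ⟨hC1, hxC1⟩ := hC1'
        obtain ⟨hC2, hxC2⟩ := hC2'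
        obtain ⟨hC3, hxC3⟩ := hC3'
        obtain ⟨y1, hy1x, hv1⟩ := other_var (hcard C1 hC1).2 hxC1
        obtain ⟨y2, hy2x, hv2⟩ := other_var (hcard C2 hC2).2 hxC2
        obtain ⟨y3, hy3x, hv3⟩ := other_var (hcard C3 hC3).2 hxC3
        have hyC : ∀ {y : V} {C : Finset (V × Bool)},
            C.image Prod.fst = {x, y} → y ∈ C.image Prod.fst := by
          intro y C h; rw [h]; simp
        have hy12 : y1 ≠ y2 := fun h =>
          no_two_shared hlin hC1 hC2 h12 hy1x.symm hxC1 hxC2 (hyC hv1)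
            (by rw [h]; exact hyC hv2)
        have hy13 : y1 ≠ y3 := fun h =>
          no_two_shared hlin hC1 hC3 h13 hy1x.symm hxC1 hxC3 (hyC hv1)
            (by rw [h]; exact hyC hv3)
        have hy23 : y2 ≠ y3 := fun h =>
          no_two_shared hlin hC2 hC3 h23 hy2x.symm hxC2 hxC3 (hyC hv2)
            (by rw [h]; exact hyC hv3)
        -- second clauses at y1 y2 y3
        obtain ⟨D1, hD1, hy1D1, hD1C1⟩ := hdeg1 C1 hC1 y1 (hyC hv1)
        obtain ⟨D2, hD2, hy2D2, hD2C2⟩ := hdeg1 C2 hC2 y2 (hyC hv2)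
        obtain ⟨D3, hD3, hy3D3, hD3C3⟩ := hdeg1 C3 hC3 y3 (hyC hv3)
        have hxD1 : x ∉ D1.image Prod.fst := fun h =>
          no_two_shared hlin hC1 hD1 (Ne.symm hD1C1) hy1x.symm hxC1 h (hyC hv1) hy1D1
        have hxD2 : x ∉ D2.image Prod.fst := fun h =>
          no_two_shared hlin hC2 hD2 (Ne.symm hD2C2) hy2x.symm hxC2 h (hyC hv2) hy2D2
        have hxD3 : x ∉ D3.image Prod.fst := fun h =>
          no_two_shared hlin hC3 hD3 (Ne.symm hD3C3) hy3x.symm hxC3 h (hyC hv3) hy3D3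
        have h5 : F.card ≤ 5 := by omega
        by_cases e12 : D1 = D2
        · exact k4e_case h5 hlin hdeg1 hC1 hC2 hC3 h12 h13 h23 hv1 hv2 hv3
            hy1x hy2x hy3x hy12 hy13 hy23 hD1 hxD1 hy1D1 (e12 ▸ hy2D2)
            hD3 hxD3 hy3D3 (hcard D3 hD3).2 (hcard D1 hD1).2
        · by_cases e13 : D1 = D3
          · exact k4e_case h5 hlin hdeg1 hC1 hC3 hC2 h13 h12 h23.symm hv1 hv3 hv2
              hy1x hy3x hy2x hy13 hy12 hy23.symm hD1 hxD1 hy1D1 (e13 ▸ hy3D3)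
              hD2 hxD2 hy2D2 (hcard D2 hD2).2 (hcard D1 hD1).2
          · by_cases e23 : D2 = D3
            · exact k4e_case h5 hlin hdeg1 hC2 hC3 hC1 h23 h12.symm h13.symm hv2 hv3 hv1
                hy2x hy3x hy1x hy23 hy12.symm hy13.symm hD2 hxD2 hy2D2 (e23 ▸ hy3D3)
                hD1 hxD1 hy1D1 (hcard D1 hD1).2 (hcard D2 hD2).2
            · -- six distinct clauses: contradiction with card ≤ 5
              exfalso
              have hD1C : D1 ≠ C1 ∧ D1 ≠ C2 ∧ D1 ≠ C3 :=
                ⟨hD1C1, fun h => hxD1 (h ▸ hxC2), fun h => hxD1 (h ▸ hxC3)⟩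
              have hD2C : D2 ≠ C1 ∧ D2 ≠ C2 ∧ D2 ≠ C3 :=
                ⟨fun h => hxD2 (h ▸ hxC1), hD2C2, fun h => hxD2 (h ▸ hxC3)⟩
              have hD3C : D3 ≠ C1 ∧ D3 ≠ C2 ∧ D3 ≠ C3 :=
                ⟨fun h => hxD3 (h ▸ hxC1), fun h => hxD3 (h ▸ hxC2), hD3C3⟩
              have hsub : ({C1, C2, C3, D1, D2, D3} : Finset (Finset (V × Bool))) ⊆ F := by
                intro w hw
                simp only [Finset.mem_insert, Finset.mem_singleton] at hw
                rcases hw with rfl | rfl | rfl | rfl | rfl | rfl <;> assumption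
              have hcard6 : ({C1, C2, C3, D1, D2, D3} :
                  Finset (Finset (V × Bool))).card = 6 := by
                rw [Finset.card_insert_of_notMem
                    (by simp [h12, h13, (hD1C.1).symm, (hD2C.1).symm, (hD3C.1).symm]),
                  Finset.card_insert_of_notMem
                    (by simp [h23, (hD1C.2.1).symm, (hD2C.2.1).symm, (hD3C.2.1).symm]),
                  Finset.card_insert_of_notMem
                    (by simp [(hD1C.2.2).symm, (hD2C.2.2).symm, (hD3C.2.2).symm]),
                  Finset.card_insert_of_notMem (by simp [e12, e13]),
                  Finset.card_insert_of_notMem (by simp [e23]),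
                  Finset.card_singleton]
              have := Finset.card_le_card hsub
              omega
      · -- all degrees ≤ 2 : Hall's theorem
        push_neg at hbig
        set T : {C // C ∈ F} → Finset V := fun C => C.1.image Prod.fst with hT
        have hall : ∀ s : Finset {C // C ∈ F}, s.card ≤ (s.biUnion T).card := by
          intro s
          set B := s.biUnion T with hB
          have key : 2 * s.card ≤ 2 * B.card := by
            calc 2 * s.card = ∑ C ∈ s, (T C).card := by
                  rw [Finset.sum_congr rfl (fun C _ => (hcard C.1 C.2).2), Finset.sum_const]
                  ring
            _ = ∑ C ∈ s, ∑ v ∈ B, (if v ∈ T C then 1 else 0) := by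
                  refine Finset.sum_congr rfl (fun C hC => ?_)
                  have hTCB : B.filter (fun v => v ∈ T C) = T C := by
                    rw [Finset.filter_mem_eq_inter, Finset.inter_eq_right]
                    exact fun v hv => Finset.mem_biUnion.mpr ⟨C, hC, hv⟩
                  rw [← Finset.card_filter, hTCB]
            _ = ∑ v ∈ B, ∑ C ∈ s, (if v ∈ T C then 1 else 0) := Finset.sum_comm
            _ = ∑ v ∈ B, (s.filter (fun C => v ∈ T C)).card := by
                  refine Finset.sum_congr rfl (fun v _ => ?_)
                  exact (Finset.card_filter _ _).symm
            _ ≤ ∑ v ∈ B, 2 := by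
                  refine Finset.sum_le_sum (fun v hv => ?_)
                  obtain ⟨C, hCs, hvC⟩ := Finset.mem_biUnion.mp hv
                  have hle : (s.filter (fun C => v ∈ T C)).card ≤
                      (F.filter (fun D => v ∈ D.image Prod.fst)).card := by
                    apply Finset.card_le_card_of_injOn (fun C => C.1)
                    · intro E hE
                      rw [Finset.mem_coe, Finset.mem_filter] at hE ⊢
                      exact ⟨E.2, hE.2⟩
                    · intro a _ b _ h
                      exact Subtype.ext h
                  exact hle.trans (hbig C.1 C.2 v hvC)
            _ = 2 * B.card := by rw [Finset.sum_const]; ring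
          omega
        obtain ⟨f, hfinj, hfmem⟩ :=
          (Finset.all_card_le_biUnion_card_iff_exists_injective T).mp hall
        refine ⟨fun v => if h : ∃ b, ∃ C : {C // C ∈ F}, f C = v ∧ (v, b) ∈ C.1
          then h.choose else true, ?_⟩
        intro C hC
        set Cs : {C // C ∈ F} := ⟨C, hC⟩ with hCs
        obtain ⟨b0, hb0⟩ := mem_of_var (hfmem Cs)
        have hex : ∃ b, ∃ C' : {C // C ∈ F}, f C' = f Cs ∧ (f Cs, b) ∈ C'.1 :=
          ⟨b0, Cs, rfl, hb0⟩
        refine ⟨(f Cs, hex.choose), ?_, dif_pos hex⟩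
        obtain ⟨C', hfC', hmemC'⟩ := hex.choose_spec
        have : C' = Cs := hfinj hfC'
        rw [this] at hmemC'
        exact hmemC'

end Main

/-- Every unsatisfiable linear 2-CNF formula has at least 6 clauses. -/
theorem stmt17 {V : Type*} [DecidableEq V]
    (F : Finset (Finset (V × Bool)))
    (hcard : ∀ C ∈ F, C.card = 2 ∧ (C.image Prod.fst).card = 2)
    (hlin : ∀ C ∈ F, ∀ D ∈ F, C ≠ D →
      ((C.image Prod.fst) ∩ (D.image Prod.fst)).card ≤ 1)
    (hunsat : ∀ α : V → Bool, ∃ C ∈ F, ∀ p ∈ C, α p.1 ≠ p.2) :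
    6 ≤ F.card := by
  by_contra h
  push_neg at h
  obtain ⟨α, hα⟩ := sat_of_card_le_five F.card F rfl (by omega) hcard hlin
  obtain ⟨C, hC, hbad⟩ := hunsat α
  obtain ⟨p, hp, hsat⟩ := hα C hC
  exact hbad p hp hsat
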